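/- The eigenvalues of adjacency matrices of finite trees are dense in ℝ: for every real number y and every ε > 0 there exist a finite tree T (a connected acyclic simple graph) and a real eigenvalue λ of the adjacency matrix of T with |λ − y| < ε. -/

import Mathlib

open SimpleGraph Polynomial

section TreeLemma

variable {V : Type*} [Fintype V] [DecidableEq V]

omit [Fintype V] [DecidableEq V] in
/-- In a "parent-function graph", there are no nontrivial closed trails. -/
lemma closed_trail_nil (G : SimpleGraph V) (f : V → V) (h : V → ℕ)
    (hadj : ∀ a b, G.Adj a b ↔ (f a = b ∧ h b < h a) ∨ (f b = a ∧ h a < h b)) :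
    ∀ (u : V) (d : G.Walk u u), d.IsTrail → (∀ w ∈ d.support, h w ≤ h u) →
      d = SimpleGraph.Walk.nil := by
  intro u d hd hsup
  cases d with
  | nil => rfl
  | @cons _ a _ ha t =>
    exfalso
    have hau : u ≠ a := ha.ne
    have hta : a ∈ (SimpleGraph.Walk.cons ha t).support := by
      rw [SimpleGraph.Walk.support_cons]
      exact List.mem_cons_of_mem _ t.start_mem_support
    have hfa : f u = a := by
      rcases (hadj u a).1 ha with ⟨h1, _⟩ | ⟨_, hlt⟩
      · exact h1
      · exact absurd (hsup a hta) (by omega)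
    obtain ⟨b, hb, t2, ht2⟩ := SimpleGraph.Walk.exists_eq_cons_of_ne hau t.reverse
    have htb : b ∈ (SimpleGraph.Walk.cons ha t).support := by
      rw [SimpleGraph.Walk.support_cons]
      apply List.mem_cons_of_mem
      have : b ∈ t.reverse.support := by
        rw [ht2, SimpleGraph.Walk.support_cons]
        exact List.mem_cons_of_mem _ t2.start_mem_support
      rwa [SimpleGraph.Walk.support_reverse, List.mem_reverse] at this
    have hfb : f u = b := by
      rcases (hadj u b).1 hb with ⟨h1, _⟩ | ⟨_, hlt⟩
      · exact h1
      · exact absurd (hsup b htb) (by omega)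
    have hab : a = b := hfa ▸ hfb
    have he1 : s(u, b) ∈ t.edges := by
      have : s(u, b) ∈ t.reverse.edges := by
        rw [ht2, SimpleGraph.Walk.edges_cons]
        exact List.mem_cons_self
      rwa [SimpleGraph.Walk.edges_reverse, List.mem_reverse] at this
    have hnodup := hd.edges_nodup
    rw [SimpleGraph.Walk.edges_cons] at hnodup
    rw [← hab] at he1
    exact (List.nodup_cons.1 hnodup).1 he1

lemma isTree_of_parent (G : SimpleGraph V) (f : V → V) (h : V → ℕ) (r : V)
    (hf : ∀ v, v ≠ r → h (f v) < h v)
    (hadj : ∀ a b, G.Adj a b ↔ (f a = b ∧ h b < h a) ∨ (f b = a ∧ h a < h b)) :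
    G.IsTree := by
  constructor
  · -- connected
    have hreach : ∀ (N : ℕ) (v : V), h v ≤ N → G.Reachable v r := by
      intro N
      induction N with
      | zero =>
        intro v hv
        by_cases hvr : v = r
        · subst hvr; exact SimpleGraph.Reachable.refl v
        · exact absurd (hf v hvr) (by omega)
      | succ N ih =>
        intro v hv
        by_cases hvr : v = r
        · subst hvr; exact SimpleGraph.Reachable.refl v
        · have hlt := hf v hvr
          have hadj' : G.Adj v (f v) := (hadj v (f v)).2 (Or.inl ⟨rfl, hlt⟩)
          exact hadj'.reachable.trans (ih (f v) (by omega))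
    have : Nonempty V := ⟨r⟩
    exact SimpleGraph.Connected.mk
      (fun a b => (hreach (h a) a le_rfl).trans (hreach (h b) b le_rfl).symm)
  · -- acyclic
    intro v c hc
    obtain ⟨u, hu_mem, hu_max⟩ := Finset.exists_max_image c.support.toFinset h
      ⟨v, List.mem_toFinset.2 c.start_mem_support⟩
    rw [List.mem_toFinset] at hu_mem
    have hc' := hc.rotate hu_mem
    have hsup : ∀ w ∈ (c.rotate u hu_mem).support, h w ≤ h u := by
      intro w hw
      rw [SimpleGraph.Walk.support_eq_cons] at hw
      rcases List.mem_cons.1 hw with rfl | hw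
      · exact le_rfl
      · have : w ∈ c.support.tail :=
          (SimpleGraph.Walk.support_rotate c u hu_mem).mem_iff.1 hw
        have : w ∈ c.support := by
          rw [SimpleGraph.Walk.support_eq_cons]
          exact List.mem_cons_of_mem _ this
        exact hu_max w (List.mem_toFinset.2 this)
    have := closed_trail_nil G f h hadj u (c.rotate u hu_mem) hc'.isTrail hsup
    exact hc'.ne_nil this

end TreeLemma

/-- parent function for the caterpillar graph -/
def catF (k n : ℕ) : Fin k × Fin (n+1) → Fin k × Fin (n+1) := fun c =>
  if c.2 = 0 then (⟨c.1.1 - 1, Nat.lt_of_le_of_lt (Nat.sub_le _ _) c.1.isLt⟩, 0)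
  else (c.1, 0)

/-- height function for the caterpillar graph -/
def catH (k n : ℕ) : Fin k × Fin (n+1) → ℕ := fun c =>
  2 * c.1.1 + (if c.2 = 0 then 0 else 1)

/-- the caterpillar graph: a path on `k` vertices with `n` pendant leaves attached to each -/
def catG (k n : ℕ) : SimpleGraph (Fin k × Fin (n+1)) where
  Adj a b := (catF k n a = b ∧ catH k n b < catH k n a) ∨
    (catF k n b = a ∧ catH k n a < catH k n b)
  symm := ⟨fun a b hab => hab.symm⟩
  loopless := ⟨fun a hab => by rcases hab with ⟨_, hlt⟩ | ⟨_, hlt⟩ <;> exact lt_irrefl _ hlt⟩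

instance catGDec (k n : ℕ) : DecidableRel (catG k n).Adj := fun a b =>
  decidable_of_iff ((catF k n a = b ∧ catH k n b < catH k n a) ∨
    (catF k n b = a ∧ catH k n a < catH k n b)) Iff.rfl

lemma catG_adj (k n : ℕ) (i x : Fin k) (s t : Fin (n+1)) :
    (catG k n).Adj (i, s) (x, t) ↔
      (s = 0 ∧ t = 0 ∧ (x.1 + 1 = i.1 ∨ i.1 + 1 = x.1)) ∨
      (x = i ∧ s = 0 ∧ t ≠ 0) ∨ (x = i ∧ t = 0 ∧ s ≠ 0) := by
  show ((catF k n (i, s) = (x, t) ∧ _) ∨ (catF k n (x, t) = (i, s) ∧ _)) ↔ _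
  by_cases hs : s = 0 <;> by_cases ht : t = 0 <;>
    simp [catF, catH, hs, ht, Prod.ext_iff, Fin.ext_iff, Fin.val_zero] <;>
    simp only [Fin.ext_iff, Fin.val_zero] at hs ht <;> omega

lemma catH_parent (k n : ℕ) (hk : 0 < k) (c : Fin k × Fin (n+1))
    (hc : c ≠ (⟨0, hk⟩, 0)) : catH k n (catF k n c) < catH k n c := by
  obtain ⟨i, s⟩ := c
  by_cases hs : s = 0
  · subst hs
    have hi : i.1 ≠ 0 := by
      intro h
      exact hc (by rw [Prod.ext_iff]; exact ⟨Fin.ext h, rfl⟩)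
    simp [catF, catH]
    omega
  · simp [catF, catH, hs]

/-- the eigenvector for the caterpillar graph -/
noncomputable def catW (k n : ℕ) (lam θ : ℝ) : Fin k × Fin (n+1) → ℝ := fun c =>
  (if c.2 = 0 then lam else 1) * Real.sin ((c.1.1 + 1) * θ)

lemma eval_charpoly' {m : ℕ} (M : Matrix (Fin m) (Fin m) ℝ) (x : ℝ) :
    M.charpoly.eval x = (x • (1 : Matrix (Fin m) (Fin m) ℝ) - M).det := by
  rw [Matrix.charpoly, ← Polynomial.coe_evalRingHom, RingHom.map_det]
  congr 1
  ext i j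
  by_cases hij : i = j <;>
    simp [Matrix.charmatrix_apply, hij, Matrix.one_apply, Matrix.diagonal_apply,
      Matrix.sub_apply, Matrix.smul_apply]
-- key sum identity
lemma catG_key (k n j : ℕ) (hk : 0 < k) (hj1 : 1 ≤ j) (hjk : j ≤ k) (lam : ℝ)
    (hquad : lam ^ 2 = 2 * Real.cos (j * Real.pi / (k + 1)) * lam + n) (c : Fin k × Fin (n+1)) :
    ∑ d : Fin k × Fin (n+1), (if (catG k n).Adj c d then catW k n lam (j * Real.pi / (k + 1)) d else 0)
      = lam * catW k n lam (j * Real.pi / (k + 1)) c := by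
  set θ := j * Real.pi / (k + 1) with hθ
  obtain ⟨i, s⟩ := c
  by_cases hs : s = 0
  · subst hs
    rw [Fintype.sum_prod_type]
    have Fx : ∀ x : Fin k,
        (∑ t : Fin (n+1), if (catG k n).Adj (i, 0) (x, t) then catW k n lam θ (x, t) else 0)
        = (if x = i then (n : ℝ) * Real.sin ((i.1 + 1) * θ) else 0)
          + ((if x.1 + 1 = i.1 then lam * Real.sin ((x.1 + 1) * θ) else 0)
          + (if i.1 + 1 = x.1 then lam * Real.sin ((x.1 + 1) * θ) else 0)) := by
      intro x
      by_cases hxi : x = i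
      · subst hxi
        have hiff : ∀ t : Fin (n+1), ((catG k n).Adj (x, 0) (x, t)) ↔ ¬ t = 0 := by
          intro t; rw [catG_adj]
          constructor
          · rintro (⟨_, _, h⟩ | ⟨_, _, h⟩ | ⟨_, h, h'⟩)
            · omega
            · exact h
            · exact absurd rfl h'
          · intro ht; exact Or.inr (Or.inl ⟨rfl, rfl, ht⟩)
        have hne1 : ¬ (x.1 + 1 = x.1) := by omega
        rw [if_pos rfl, if_neg hne1]
        calc (∑ t : Fin (n+1), if (catG k n).Adj (x, 0) (x, t) then catW k n lam θ (x, t) else 0)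
            = ∑ _t : Fin (n+1), Real.sin ((x.1 + 1) * θ)
              - ∑ t : Fin (n+1), (if t = (0 : Fin (n+1)) then Real.sin ((x.1 + 1) * θ) else 0) := by
              rw [← Finset.sum_sub_distrib]
              apply Finset.sum_congr rfl; intro t _
              by_cases ht : t = 0
              · rw [if_neg (by rw [hiff]; exact fun h => h ht), if_pos ht]; ring
              · rw [if_pos ((hiff t).2 ht), if_neg ht, sub_zero]
                simp [catW, ht]
          _ = (n : ℝ) * Real.sin ((x.1 + 1) * θ) + (0 + 0) := by
              rw [Finset.sum_const, Finset.sum_ite_eq' Finset.univ (0 : Fin (n+1))]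
              simp only [Finset.card_univ, Fintype.card_fin, Finset.mem_univ, if_pos]
              push_cast; ring
      · have hiff : ∀ t : Fin (n+1), ((catG k n).Adj (i, 0) (x, t)) ↔
            (t = 0 ∧ (x.1 + 1 = i.1 ∨ i.1 + 1 = x.1)) := by
          intro t; rw [catG_adj]
          constructor
          · rintro (⟨_, h1, h2⟩ | ⟨h1, _, _⟩ | ⟨h1, _, _⟩)
            · exact ⟨h1, h2⟩
            · exact absurd h1 hxi
            · exact absurd h1 hxi
          · rintro ⟨ht, hc⟩; exact Or.inl ⟨rfl, ht, hc⟩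
        rw [if_neg hxi]
        by_cases hc : x.1 + 1 = i.1 ∨ i.1 + 1 = x.1
        · calc (∑ t : Fin (n+1), if (catG k n).Adj (i, 0) (x, t) then catW k n lam θ (x, t) else 0)
              = ∑ t : Fin (n+1), (if t = (0 : Fin (n+1)) then catW k n lam θ (x, t) else 0) := by
                apply Finset.sum_congr rfl; intro t _
                exact if_congr (by rw [hiff]; simp [hc]) rfl rfl
            _ = catW k n lam θ (x, 0) := by
                rw [Finset.sum_ite_eq' Finset.univ (0 : Fin (n+1))]; simp
            _ = 0 + ((if x.1 + 1 = i.1 then lam * Real.sin ((x.1 + 1) * θ) else 0)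
                + (if i.1 + 1 = x.1 then lam * Real.sin ((x.1 + 1) * θ) else 0)) := by
                have hnot : ¬ (x.1 + 1 = i.1 ∧ i.1 + 1 = x.1) := by omega
                rcases hc with h1 | h2
                · rw [if_pos h1, if_neg (by omega)]
                  simp [catW]
                · rw [if_neg (by omega), if_pos h2]
                  simp [catW]
        · push_neg at hc
          rw [if_neg hc.1, if_neg hc.2]
          simp only [add_zero]
          apply Finset.sum_eq_zero; intro t _
          rw [if_neg]
          rw [hiff]
          rintro ⟨_, h⟩
          exact absurd h (by omega)
    rw [Finset.sum_congr rfl fun x _ => Fx x, Finset.sum_add_distrib, Finset.sum_add_distrib,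
      Finset.sum_ite_eq' Finset.univ i]
    simp only [Finset.mem_univ, if_pos]
    have hS1 : (∑ x : Fin k, if x.1 + 1 = i.1 then lam * Real.sin ((x.1 + 1) * θ) else 0)
        = lam * Real.sin ((i.1 : ℝ) * θ) := by
      by_cases hi : i.1 = 0
      · rw [Finset.sum_eq_zero (fun x _ => if_neg (by omega))]
        simp [hi]
      · have hlt : i.1 - 1 < k := by have := i.isLt; omega
        calc (∑ x : Fin k, if x.1 + 1 = i.1 then lam * Real.sin ((x.1 + 1) * θ) else 0)
            = ∑ x : Fin k, if x = (⟨i.1 - 1, hlt⟩ : Fin k) then lam * Real.sin ((x.1 + 1) * θ) else 0 := by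
              apply Finset.sum_congr rfl; intro x _
              exact if_congr (by rw [Fin.ext_iff]; simp; omega) rfl rfl
          _ = lam * Real.sin ((((⟨i.1 - 1, hlt⟩ : Fin k)).1 + 1) * θ) := by
              rw [Finset.sum_ite_eq' Finset.univ]; simp
          _ = lam * Real.sin ((i.1 : ℝ) * θ) := by
              congr 2
              show (((i.1 - 1 : ℕ) : ℝ) + 1) * θ = (i.1 : ℝ) * θ
              rw [Nat.cast_sub (by omega : 1 ≤ i.1)]
              push_cast; ring
    have hS2 : (∑ x : Fin k, if i.1 + 1 = x.1 then lam * Real.sin ((x.1 + 1) * θ) else 0)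
        = lam * Real.sin (((i.1 : ℝ) + 2) * θ) := by
      by_cases hi : i.1 + 1 < k
      · calc (∑ x : Fin k, if i.1 + 1 = x.1 then lam * Real.sin ((x.1 + 1) * θ) else 0)
            = ∑ x : Fin k, if x = (⟨i.1 + 1, hi⟩ : Fin k) then lam * Real.sin ((x.1 + 1) * θ) else 0 := by
              apply Finset.sum_congr rfl; intro x _
              exact if_congr (by rw [Fin.ext_iff]; simp; omega) rfl rfl
          _ = lam * Real.sin ((((⟨i.1 + 1, hi⟩ : Fin k)).1 + 1) * θ) := by
              rw [Finset.sum_ite_eq' Finset.univ]; simp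
          _ = lam * Real.sin (((i.1 : ℝ) + 2) * θ) := by
              congr 2
              show (((i.1 + 1 : ℕ) : ℝ) + 1) * θ = ((i.1 : ℝ) + 2) * θ
              push_cast; ring
      · have hik : i.1 + 1 = k := by have := i.isLt; omega
        rw [Finset.sum_eq_zero (fun x _ => if_neg (by have := x.isLt; omega))]
        have h1 : ((i.1 : ℝ) + 2) * θ = (j : ℕ) * Real.pi := by
          have hk1 : ((i.1 : ℝ) + 2) = (k : ℝ) + 1 := by
            have h' : ((i.1 + 1 : ℕ) : ℝ) = ((k : ℕ) : ℝ) := by rw [hik]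
            push_cast at h'; linarith
          rw [hk1, hθ]
          field_simp
        rw [h1, Real.sin_nat_mul_pi, mul_zero]
    rw [hS1, hS2]
    have tri : Real.sin ((i.1 : ℝ) * θ) + Real.sin (((i.1 : ℝ) + 2) * θ)
        = 2 * Real.cos θ * Real.sin (((i.1 : ℝ) + 1) * θ) := by
      have e1 : ((i.1 : ℝ)) * θ = ((i.1 : ℝ) + 1) * θ - θ := by ring
      have e2 : ((i.1 : ℝ) + 2) * θ = ((i.1 : ℝ) + 1) * θ + θ := by ring
      rw [e1, e2, Real.sin_sub, Real.sin_add]; ring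
    have hcw : catW k n lam θ (i, (0 : Fin (n+1))) = lam * Real.sin (((i.1 : ℝ) + 1) * θ) := by
      simp [catW]
    rw [hcw]
    linear_combination lam * tri - Real.sin (((i.1 : ℝ) + 1) * θ) * hquad
  · -- leaf vertex: unique neighbour (i, 0)
    have hadj : ∀ d : Fin k × Fin (n+1), (catG k n).Adj (i, s) d ↔ d = (i, 0) := by
      intro ⟨x, t⟩
      rw [catG_adj]
      constructor
      · rintro (⟨h1, _⟩ | ⟨rfl, h1, _⟩ | ⟨rfl, h1, _⟩)
        · exact absurd h1 hs
        · exact absurd h1 hs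
        · rw [h1]
      · rintro h
        rw [Prod.ext_iff] at h
        exact Or.inr (Or.inr ⟨h.1, h.2, hs⟩)
    calc ∑ d : Fin k × Fin (n+1), (if (catG k n).Adj (i, s) d then catW k n lam θ d else 0)
        = ∑ d : Fin k × Fin (n+1), (if d = (i, 0) then catW k n lam θ d else 0) := by
          exact Finset.sum_congr rfl fun d _ => if_congr (hadj d) rfl rfl
      _ = catW k n lam θ (i, 0) := by rw [Finset.sum_ite_eq' Finset.univ (i,0) (catW k n lam θ)]; simp
      _ = lam * catW k n lam θ (i, s) := by simp [catW, hs]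

lemma caterpillar_root (n k j : ℕ) (hk : 0 < k) (hj1 : 1 ≤ j) (hjk : j ≤ k) (lam : ℝ)
    (hquad : lam ^ 2 = 2 * Real.cos (j * Real.pi / (k + 1)) * lam + n)
    (hnz : lam ≠ 0 ∨ 1 ≤ n) :
    ∃ (m : ℕ) (T : SimpleGraph (Fin m)) (_ : DecidableRel T.Adj),
      T.IsTree ∧ (T.adjMatrix ℝ).charpoly.IsRoot lam := by
  set θ := (j : ℝ) * Real.pi / (k + 1) with hθdef
  set m := k * (n + 1) with hm
  have e : Fin (k * (n+1)) ≃ Fin k × Fin (n+1) := finProdFinEquiv.symm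
  set G := catG k n
  set T : SimpleGraph (Fin m) := SimpleGraph.comap e G with hT
  have hTadj : ∀ a b : Fin m, T.Adj a b ↔ G.Adj (e a) (e b) := fun a b => Iff.rfl
  letI instT : DecidableRel T.Adj := fun a b => decidable_of_iff _ (hTadj a b).symm
  refine ⟨m, T, instT, ?_, ?_⟩
  · -- tree
    apply isTree_of_parent T (fun a => e.symm (catF k n (e a))) (fun a => catH k n (e a))
      (e.symm (⟨0, hk⟩, 0))
    · intro v hv
      have hv' : e v ≠ (⟨0, hk⟩, (0 : Fin (n+1))) := by
        intro h; apply hv; rw [← h, Equiv.symm_apply_apply]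
      have : catH k n (catF k n (e v)) < catH k n (e v) :=
        catH_parent k n hk (e v) hv'
      simpa [Equiv.apply_symm_apply] using this
    · intro a b
      rw [hTadj]
      show ((catF k n (e a) = e b ∧ _) ∨ (catF k n (e b) = e a ∧ _)) ↔ _
      constructor
      · rintro (⟨h1, h2⟩ | ⟨h1, h2⟩)
        · exact Or.inl ⟨by rw [h1, Equiv.symm_apply_apply], h2⟩
        · exact Or.inr ⟨by rw [h1, Equiv.symm_apply_apply], h2⟩
      · rintro (⟨h1, h2⟩ | ⟨h1, h2⟩)
        · exact Or.inl ⟨by rw [← h1, Equiv.apply_symm_apply], h2⟩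
        · exact Or.inr ⟨by rw [← h1, Equiv.apply_symm_apply], h2⟩
  · -- eigenvalue
    have hθpos : 0 < θ := by
      have hj : (0 : ℝ) < j := by exact_mod_cast hj1
      exact div_pos (mul_pos hj Real.pi_pos) (by positivity)
    have hθlt : θ < Real.pi := by
      rw [hθdef, div_lt_iff₀ (by positivity)]
      have hjr : (j : ℝ) ≤ k := by exact_mod_cast hjk
      nlinarith [Real.pi_pos]
    have hsin : 0 < Real.sin θ := Real.sin_pos_of_pos_of_lt_pi hθpos hθlt
    set v : Fin m → ℝ := fun a => catW k n lam θ (e a) with hv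
    have hmul : Matrix.mulVec (T.adjMatrix ℝ) v = lam • v := by
      funext a
      have h1 : (Matrix.mulVec (T.adjMatrix ℝ) v) a = ∑ b : Fin m, (if T.Adj a b then v b else 0) := by
        simp [Matrix.mulVec, dotProduct, SimpleGraph.adjMatrix_apply, ite_mul,
          one_mul, zero_mul]
      rw [h1]
      have h2 : (∑ b : Fin m, (if T.Adj a b then v b else 0))
          = ∑ d : Fin k × Fin (n+1), (if G.Adj (e a) d then catW k n lam θ d else 0) := by
        rw [← Equiv.sum_comp e (fun d => if G.Adj (e a) d then catW k n lam θ d else 0)]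
        exact Finset.sum_congr rfl fun b _ => if_congr (hTadj a b) rfl rfl
      rw [h2, catG_key k n j hk hj1 hjk lam hquad (e a)]
      simp [hv]
      exact Or.inl rfl
    have hvne : v ≠ 0 := by
      rcases hnz with hl | hn
      · intro h0
        have hval : v (e.symm (⟨0, hk⟩, (0 : Fin (n+1)))) = lam * Real.sin θ := by
          simp [hv, catW]
        rw [h0] at hval
        exact mul_ne_zero hl (ne_of_gt hsin) hval.symm
      · intro h0
        have h1n : (1 : ℕ) < n + 1 := by omega
        have hval : v (e.symm (⟨0, hk⟩, (⟨1, h1n⟩ : Fin (n+1)))) = Real.sin θ := by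
          have : (⟨1, h1n⟩ : Fin (n+1)) ≠ 0 := by
            intro h; exact absurd (congrArg Fin.val h) (by simp)
          simp [hv, catW, this]
        rw [h0] at hval
        exact (ne_of_gt hsin) hval.symm
    have hdet : (lam • (1 : Matrix (Fin m) (Fin m) ℝ) - T.adjMatrix ℝ).det = 0 := by
      rw [← Matrix.exists_mulVec_eq_zero_iff]
      refine ⟨v, hvne, ?_⟩
      rw [Matrix.sub_mulVec, Matrix.smul_mulVec, Matrix.one_mulVec, hmul, sub_self]
    show (T.adjMatrix ℝ).charpoly.IsRoot lam
    rw [Polynomial.IsRoot.def, eval_charpoly']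
    exact hdet


lemma cos_lip (a b : ℝ) : |Real.cos a - Real.cos b| ≤ |a - b| := by
  rw [Real.cos_sub_cos]
  have h1 : |Real.sin ((a + b) / 2)| ≤ 1 :=
    abs_le.mpr ⟨Real.neg_one_le_sin _, Real.sin_le_one _⟩
  have h2 : |Real.sin ((a - b) / 2)| ≤ |(a - b) / 2| := Real.abs_sin_le_abs
  rw [abs_mul, abs_mul]
  have : |(a - b) / 2| = |a - b| / 2 := by rw [abs_div]; norm_num
  rw [this] at h2
  have h3 : (0:ℝ) ≤ |a - b| := abs_nonneg _
  calc |(-2 : ℝ)| * |Real.sin ((a + b) / 2)| * |Real.sin ((a - b) / 2)|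
      ≤ 2 * 1 * (|a - b| / 2) := by
        apply mul_le_mul _ h2 (abs_nonneg _) (by positivity)
        rw [abs_neg, abs_two]
        exact mul_le_mul_of_nonneg_left h1 (by norm_num)
    _ = |a - b| := by ring

lemma grid_approx (θ δ : ℝ) (h0 : 0 < θ) (hπ : θ < Real.pi) (hδ : 0 < δ) :
    ∃ j k : ℕ, 1 ≤ j ∧ j ≤ k ∧ 0 < k ∧ |(j : ℝ) * Real.pi / (k + 1) - θ| < δ ∧
      Real.cos ((j : ℝ) * Real.pi / (k + 1)) ≠ 0 := by
  obtain ⟨N, hN⟩ := exists_nat_gt (max (Real.pi / (Real.pi - θ)) (Real.pi / δ))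
  set k := 2 * N with hk
  have hπθ : 0 < Real.pi - θ := by linarith
  have hNπ : Real.pi / (Real.pi - θ) < N := lt_of_le_of_lt (le_max_left _ _) hN
  have hNδ : Real.pi / δ < N := lt_of_le_of_lt (le_max_right _ _) hN
  have hNpos : 0 < (N : ℝ) := lt_trans (by positivity) hNπ
  have hK : (N : ℝ) ≤ (k : ℝ) + 1 := by simp only [hk]; push_cast; linarith
  have hKpos : (0 : ℝ) < (k : ℝ) + 1 := by linarith
  -- error of grid: π/(k+1) < δ
  have herr : Real.pi / ((k : ℝ) + 1) < δ := by
    rw [div_lt_iff₀ hKpos]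
    have : Real.pi < δ * N := by
      rw [div_lt_iff₀ hδ] at hNδ; linarith
    calc Real.pi < δ * N := this
      _ ≤ δ * ((k:ℝ) + 1) := by nlinarith
  set x := θ * ((k : ℝ) + 1) / Real.pi with hx
  have hxpos : 0 < x := by positivity
  set j := ⌈x⌉₊ with hj
  have hj1 : 1 ≤ j := Nat.one_le_ceil_iff.2 hxpos
  have hxk : x ≤ (k : ℝ) := by
    rw [hx, div_le_iff₀ Real.pi_pos]
    have h1 : Real.pi ≤ (Real.pi - θ) * N := by
      rw [div_lt_iff₀ hπθ] at hNπ; linarith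
    have h2 : (Real.pi - θ) * N ≤ (Real.pi - θ) * ((k:ℝ) + 1) := by nlinarith
    push_cast
    nlinarith
  have hjk : j ≤ k := Nat.ceil_le.2 hxk
  have hjlo : x ≤ (j : ℝ) := Nat.le_ceil x
  have hjhi : (j : ℝ) < x + 1 := Nat.ceil_lt_add_one (le_of_lt hxpos)
  have hθeq : θ = x * Real.pi / ((k : ℝ) + 1) := by
    rw [hx]; field_simp
  have hsub : (j : ℝ) * Real.pi / ((k:ℝ) + 1) - θ = ((j:ℝ) - x) * (Real.pi / ((k:ℝ)+1)) := by
    rw [hθeq]; field_simp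
  have habs : |(j : ℝ) * Real.pi / (k + 1) - θ| < δ := by
    rw [hsub, abs_of_nonneg (by apply mul_nonneg (by linarith) (by positivity))]
    calc ((j:ℝ) - x) * (Real.pi / ((k:ℝ)+1)) ≤ 1 * (Real.pi / ((k:ℝ)+1)) := by
          apply mul_le_mul_of_nonneg_right (by linarith) (by positivity)
      _ < δ := by rw [one_mul]; exact herr
  refine ⟨j, k, hj1, hjk, by omega, habs, ?_⟩
  -- cos nonzero by parity
  intro hcos
  rw [Real.cos_eq_zero_iff] at hcos
  obtain ⟨l, hl⟩ := hcos
  have hpi := Real.pi_ne_zero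
  rw [div_eq_iff (ne_of_gt hKpos)] at hl
  have h3 : (2 * (j:ℝ)) * Real.pi = ((2 * (l:ℝ) + 1) * ((k:ℝ) + 1)) * Real.pi := by
    linear_combination 2 * hl
  have h4 := mul_right_cancel₀ hpi h3
  have hz : (2 * (j:ℤ)) = (2 * l + 1) * ((k:ℤ) + 1) := by exact_mod_cast h4
  have hkz : (k : ℤ) = 2 * (N : ℤ) := by exact_mod_cast congrArg (Nat.cast : ℕ → ℤ) hk
  rw [hkz] at hz
  have ho : Odd ((2 * l + 1) * (2 * (N:ℤ) + 1)) := ⟨2 * l * N + l + N, by ring⟩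
  rw [← hz] at ho
  obtain ⟨c, hc⟩ := ho
  omega

lemma quad_pos (μg nr : ℝ) (h1 : 1 ≤ nr) (h2 : |μg| ≤ 2) :
    ∃ lam : ℝ, lam ^ 2 = μg * lam + nr ∧ 0 ≤ lam - μg := by
  have hsq : Real.sqrt (μg ^ 2 + 4 * nr) ^ 2 = μg ^ 2 + 4 * nr :=
    Real.sq_sqrt (by nlinarith [sq_nonneg μg])
  have hs2 : 2 ≤ Real.sqrt (μg ^ 2 + 4 * nr) := by
    nlinarith [Real.sqrt_nonneg (μg ^ 2 + 4 * nr), hsq, sq_nonneg μg]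
  have h2' := abs_le.1 h2
  exact ⟨(μg + Real.sqrt (μg ^ 2 + 4 * nr)) / 2,
    by linear_combination (1/4) * hsq, by linarith⟩

lemma quad_neg (μg nr : ℝ) (h1 : 1 ≤ nr) (h2 : |μg| ≤ 2) :
    ∃ lam : ℝ, lam ^ 2 = μg * lam + nr ∧ lam - μg ≤ 0 := by
  have hsq : Real.sqrt (μg ^ 2 + 4 * nr) ^ 2 = μg ^ 2 + 4 * nr :=
    Real.sq_sqrt (by nlinarith [sq_nonneg μg])
  have hs2 : 2 ≤ Real.sqrt (μg ^ 2 + 4 * nr) := by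
    nlinarith [Real.sqrt_nonneg (μg ^ 2 + 4 * nr), hsq, sq_nonneg μg]
  have h2' := abs_le.1 h2
  exact ⟨(μg - Real.sqrt (μg ^ 2 + 4 * nr)) / 2,
    by linear_combination (1/4) * hsq, by linarith⟩

lemma final_bound (y μ μg lam : ℝ) (n : ℕ) (hy : y ≠ 0)
    (hyq : y ^ 2 = μ * y + n) (hq : lam ^ 2 = μg * lam + n)
    (hA : |y| ≤ |lam + y - μg|) : |lam - y| ≤ |μg - μ| := by
  have key : (lam - y) * (lam + y - μg) = (μg - μ) * y := by linear_combination hq - hyq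
  have h1 : |lam - y| * |lam + y - μg| = |μg - μ| * |y| := by
    rw [← abs_mul, key, abs_mul]
  have hypos : 0 < |y| := abs_pos.2 hy
  by_contra hcon
  push_neg at hcon
  have t1 := mul_pos (sub_pos.2 hcon) hypos
  have t2 := mul_nonneg (abs_nonneg (lam - y)) (sub_nonneg.2 hA)
  nlinarith [t1, t2, h1]

/-- The eigenvalues of adjacency matrices of finite trees are dense in ℝ: for every
real `y` and `ε > 0` there exist a finite tree `T` and a real root `lam` of the
characteristic polynomial `det(xI − A(T))` of its adjacency matrix with `|lam − y| < ε`. -/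
theorem tree_eigenvalues_dense (y ε : ℝ) (hε : 0 < ε) :
    ∃ (m : ℕ) (T : SimpleGraph (Fin m)) (_ : DecidableRel T.Adj) (lam : ℝ),
      T.IsTree ∧ (T.adjMatrix ℝ).charpoly.IsRoot lam ∧ |lam - y| < ε := by
  by_cases hy : |y| < 2
  · -- use a path (n = 0)
    have hy1 := (abs_lt.1 hy).1
    have hy2 := (abs_lt.1 hy).2
    set θ0 := Real.arccos (y / 2) with hθ0
    have hcosθ0 : Real.cos θ0 = y / 2 := Real.cos_arccos (by linarith) (by linarith)
    have h0 : 0 < θ0 := Real.arccos_pos.2 (by linarith)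
    have hπ : θ0 < Real.pi := by
      rcases lt_or_eq_of_le (Real.arccos_le_pi (y / 2)) with h | h
      · exact h
      · exact absurd (Real.arccos_eq_pi.1 h) (by intro hcon; linarith)
    obtain ⟨j, k, hj1, hjk, hk, herr, hcos⟩ := grid_approx θ0 (ε / 2) h0 hπ (by linarith)
    obtain ⟨m, T, inst, htree, hroot⟩ := caterpillar_root 0 k j hk hj1 hjk
      (2 * Real.cos ((j : ℝ) * Real.pi / (k + 1))) (by push_cast; ring)
      (Or.inl (mul_ne_zero two_ne_zero hcos))
    refine ⟨m, T, inst, 2 * Real.cos ((j : ℝ) * Real.pi / (k + 1)), htree, hroot, ?_⟩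
    have hyy : y = 2 * Real.cos θ0 := by rw [hcosθ0]; ring
    rw [hyy, ← mul_sub, abs_mul, abs_two]
    have := cos_lip ((j : ℝ) * Real.pi / (k + 1)) θ0
    linarith
  · -- caterpillar case
    push_neg at hy
    have hy0 : y ≠ 0 := by
      intro h; rw [h] at hy; simp at hy; linarith
    have hy4 : 4 ≤ y ^ 2 := by nlinarith [sq_abs y]
    set n := ⌊y ^ 2 + 1 / 2⌋₊ with hn
    have hnle : (n : ℝ) ≤ y ^ 2 + 1 / 2 := Nat.floor_le (by positivity)
    have hngt : y ^ 2 + 1 / 2 < (n : ℝ) + 1 := Nat.lt_floor_add_one _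
    have hn1 : 1 ≤ n := by
      have h1 : (1 : ℝ) ≤ (n : ℝ) := by linarith
      exact_mod_cast h1
    have hn1' : (1 : ℝ) ≤ (n : ℝ) := by exact_mod_cast hn1
    set μ := y - n / y with hμdef
    have hμy : μ * y = y ^ 2 - n := by rw [hμdef, sub_mul, div_mul_cancel₀ _ hy0]; ring
    have habs_y : 0 < |y| := by linarith
    have hμle : |μ| ≤ 1 / 4 := by
      have h1 : |μ| * |y| = |y ^ 2 - (n : ℝ)| := by rw [← abs_mul, hμy]
      have h2 : |y ^ 2 - (n : ℝ)| ≤ 1 / 2 := by rw [abs_le]; constructor <;> linarith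
      nlinarith [abs_nonneg μ]
    have hμle' := abs_le.1 hμle
    set θ0 := Real.arccos (μ / 2) with hθ0
    have hcosθ0 : Real.cos θ0 = μ / 2 := Real.cos_arccos (by linarith [hμle'.1]) (by linarith [hμle'.2])
    have h0 : 0 < θ0 := Real.arccos_pos.2 (by linarith [hμle'.2])
    have hπ : θ0 < Real.pi := by
      rcases lt_or_eq_of_le (Real.arccos_le_pi (μ / 2)) with h | h
      · exact h
      · exact absurd (Real.arccos_eq_pi.1 h) (by intro hcon; linarith [hμle'.1])
    obtain ⟨j, k, hj1, hjk, hk, herr, _⟩ := grid_approx θ0 (ε / 4) h0 hπ (by linarith)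
    set μg := 2 * Real.cos ((j : ℝ) * Real.pi / (k + 1)) with hμg
    have hΔ : |μg - μ| < ε / 2 := by
      have h1 : μ = 2 * Real.cos θ0 := by rw [hcosθ0]; ring
      rw [h1, hμg, ← mul_sub, abs_mul, abs_two]
      have := cos_lip ((j : ℝ) * Real.pi / (k + 1)) θ0
      linarith
    have hμgle : |μg| ≤ 2 := by
      rw [hμg, abs_mul, abs_two]
      have := Real.abs_cos_le_one ((j : ℝ) * Real.pi / (k + 1))
      linarith
    have hμgle' := abs_le.1 hμgle
    have hyq : y ^ 2 = μ * y + n := by linarith [hμy]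
    rcases le_or_gt 0 y with hypos | hyneg
    · have hy2 : 2 ≤ y := by rw [abs_of_nonneg hypos] at hy; exact hy
      obtain ⟨lam, hquad, hge⟩ := quad_pos μg (n : ℝ) hn1' hμgle
      have hA : |y| ≤ |lam + y - μg| := by
        rw [abs_of_nonneg (by linarith : (0:ℝ) ≤ y), abs_of_nonneg (by linarith)]
        linarith
      have hfin := final_bound y μ μg lam n hy0 hyq hquad hA
      obtain ⟨m, T, inst, htree, hroot⟩ := caterpillar_root n k j hk hj1 hjk lam
        hquad (Or.inr hn1)
      exact ⟨m, T, inst, lam, htree, hroot, by linarith⟩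
    · have hy2 : y ≤ -2 := by rw [abs_of_neg hyneg] at hy; linarith
      obtain ⟨lam, hquad, hge⟩ := quad_neg μg (n : ℝ) hn1' hμgle
      have hA : |y| ≤ |lam + y - μg| := by
        rw [abs_of_neg hyneg, abs_of_neg (by linarith : lam + y - μg < 0)]
        linarith
      have hfin := final_bound y μ μg lam n hy0 hyq hquad hA
      obtain ⟨m, T, inst, htree, hroot⟩ := caterpillar_root n k j hk hj1 hjk lam
        hquad (Or.inr hn1)
      exact ⟨m, T, inst, lam, htree, hroot, by linarith⟩
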